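/- Let p ≥ 1 and λ > 0, and let n, K be positive integers. Let ζ_{t,k} ∈ ℝ^p for t = 1, …, n and k = 1, …, K be vectors with ‖ζ_{t,k}‖_2 ≤ 1, and define Φ_t = λ I_p + Σ_{i=1}^{t−1} Σ_{k=1}^{K} ζ_{i,k} ζ_{i,k}^T for each t. Then Σ_{t=1}^{n} Σ_{k=1}^{K} √(ζ_{t,k}^T Φ_t^{−1} ζ_{t,k}) ≤ K · √( n · p · log(1 + nK/(p·λ)) / ( λ · log(1 + 1/λ) ) ). -/

import Mathlib

open Matrix

variable {p : ℕ}

lemma outer_posSemidef (v : Fin p → ℝ) : (vecMulVec v v).PosSemidef := by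
  rw [vecMulVec_eq Unit, show replicateCol Unit v = (replicateRow Unit v)ᴴ by
    rw [conjTranspose_replicateRow, star_trivial]]
  exact posSemidef_conjTranspose_mul_self _

lemma sum_outer_posSemidef {ι : Type*} (s : Finset ι) (u : ι → Fin p → ℝ) :
    (∑ i ∈ s, vecMulVec (u i) (u i)).PosSemidef := by
  classical
  induction s using Finset.cons_induction with
  | empty => simpa using Matrix.PosSemidef.zero
  | cons a s ha ih =>
    rw [Finset.sum_cons]
    exact (outer_posSemidef (u a)).add ih

lemma quad_nonneg {A : Matrix (Fin p) (Fin p) ℝ} (hA : A.PosSemidef) (v : Fin p → ℝ) :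
    0 ≤ v ⬝ᵥ A *ᵥ v := by
  simpa using hA.re_dotProduct_nonneg v

lemma det_rank_one {A : Matrix (Fin p) (Fin p) ℝ} (hA : A.PosDef) (v : Fin p → ℝ) :
    (A + vecMulVec v v).det = A.det * (1 + v ⬝ᵥ A⁻¹ *ᵥ v) := by
  rw [vecMulVec_eq Unit, det_add_replicateCol_mul_replicateRow hA.det_pos.ne'.isUnit]
  congr 1
  rw [det_unique]
  simp [Matrix.mul_apply, Matrix.add_apply, Matrix.one_apply, dotProduct, mulVec,
    Finset.mul_sum, Finset.sum_mul]
  rw [Finset.sum_comm]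
  exact Finset.sum_congr rfl fun i _ => Finset.sum_congr rfl fun j _ => by ring

lemma det_le_det_add_sum_outer {ι : Type*} (s : Finset ι) (u : ι → Fin p → ℝ) :
    ∀ A : Matrix (Fin p) (Fin p) ℝ, A.PosDef →
      A.det ≤ (A + ∑ i ∈ s, vecMulVec (u i) (u i)).det := by
  classical
  induction s using Finset.cons_induction with
  | empty => simp
  | cons a s ha ih =>
    intro A hA
    rw [Finset.sum_cons, ← add_assoc]
    refine le_trans ?_ (ih _ (hA.add_posSemidef (outer_posSemidef (u a))))
    rw [det_rank_one hA]
    nlinarith [hA.det_pos, quad_nonneg hA.inv.posSemidef (u a)]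

lemma quad_inv_le {A : Matrix (Fin p) (Fin p) ℝ} {lam : ℝ} (hlam : 0 < lam)
    (hA : A.PosDef) (hAl : (A - lam • (1 : Matrix (Fin p) (Fin p) ℝ)).PosSemidef)
    {v : Fin p → ℝ} (hv : v ⬝ᵥ v ≤ 1) :
    v ⬝ᵥ A⁻¹ *ᵥ v ≤ 1 / lam := by
  set y := A⁻¹ *ᵥ v with hy
  have hAy : A *ᵥ y = v := by
    rw [hy, mulVec_mulVec, Matrix.mul_nonsing_inv _ hA.det_pos.ne'.isUnit, one_mulVec]
  have h1 : lam * (y ⬝ᵥ y) ≤ y ⬝ᵥ v := by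
    have h0 := quad_nonneg hAl y
    rw [sub_mulVec, dotProduct_sub, hAy] at h0
    have : y ⬝ᵥ (lam • (1 : Matrix (Fin p) (Fin p) ℝ)) *ᵥ y = lam * (y ⬝ᵥ y) := by
      simp [smul_mulVec, dotProduct_smul, smul_eq_mul]
    linarith [this ▸ h0]
  have hcs : (v ⬝ᵥ y) ^ 2 ≤ (v ⬝ᵥ v) * (y ⬝ᵥ y) := by
    simpa [dotProduct, pow_two] using Finset.sum_mul_sq_le_sq_mul_sq Finset.univ v y
  have hyy : 0 ≤ y ⬝ᵥ y := by
    simpa [dotProduct, mul_self_nonneg] using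
      Finset.sum_nonneg fun i _ => mul_self_nonneg (y i)
  have hcomm : y ⬝ᵥ v = v ⬝ᵥ y := dotProduct_comm _ _
  have hw0 : 0 ≤ v ⬝ᵥ y := by
    have := quad_nonneg hA.inv.posSemidef v; rwa [← hy] at this
  have h2 : (v ⬝ᵥ y) ^ 2 ≤ y ⬝ᵥ y := le_trans hcs (by nlinarith [hyy, hv])
  have h3 : lam * (v ⬝ᵥ y) ^ 2 ≤ v ⬝ᵥ y := by
    calc lam * (v ⬝ᵥ y) ^ 2 ≤ lam * (y ⬝ᵥ y) := by nlinarith [h2]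
    _ ≤ y ⬝ᵥ v := h1
    _ = v ⬝ᵥ y := hcomm
  rcases hw0.eq_or_lt with heq | hwpos
  · rw [← heq]; positivity
  · rw [le_div_iff₀ hlam]
    nlinarith [h3, hwpos]

lemma trace_outer (v : Fin p → ℝ) : (vecMulVec v v).trace = v ⬝ᵥ v := by
  simp [Matrix.trace, Matrix.vecMulVec_apply, Matrix.diag, dotProduct]

lemma trace_eq_sum_eigs {A : Matrix (Fin p) (Fin p) ℝ} (hA : A.IsHermitian) :
    A.trace = ∑ i, hA.eigenvalues i := by
  conv_lhs => rw [hA.spectral_theorem]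
  rw [Unitary.conjStarAlgAut_apply, Matrix.trace_mul_comm, ← Matrix.mul_assoc]
  rw [show (star (hA.eigenvectorUnitary : Matrix (Fin p) (Fin p) ℝ)) *
      (hA.eigenvectorUnitary : Matrix (Fin p) (Fin p) ℝ) = 1 from
    Unitary.coe_star_mul_self _, Matrix.one_mul, Matrix.trace_diagonal]
  simp

lemma det_le_trace_div_pow {A : Matrix (Fin p) (Fin p) ℝ} (hA : A.PosSemidef)
    (hp : 1 ≤ p) : A.det ≤ (A.trace / p) ^ p := by
  have hred : A.det = ∏ i, hA.isHermitian.eigenvalues i := by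
    rw [hA.isHermitian.det_eq_prod_eigenvalues]; norm_num
  have heig : ∀ i, 0 ≤ hA.isHermitian.eigenvalues i := hA.eigenvalues_nonneg
  have hgm := Real.geom_mean_le_arith_mean (Finset.univ (α := Fin p)) (fun _ => 1)
    (fun i => hA.isHermitian.eigenvalues i) (fun _ _ => zero_le_one)
    (by simp; positivity) (fun i _ => heig i)
  simp only [Real.rpow_one, Finset.sum_const, Finset.card_univ, Fintype.card_fin,
    nsmul_eq_mul, mul_one, one_mul] at hgm
  have hpne : (p : ℝ) ≠ 0 := by positivity
  have hprod : 0 ≤ ∏ i, hA.isHermitian.eigenvalues i :=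
    Finset.prod_nonneg fun i _ => heig i
  have := Real.rpow_le_rpow (Real.rpow_nonneg hprod _) hgm (le_of_lt (by positivity : (0:ℝ) < p))
  rw [Real.rpow_inv_rpow hprod hpne, Real.rpow_natCast] at this
  rw [hred, trace_eq_sum_eigs hA.isHermitian]
  exact this

lemma log_concave_bound {lam w : ℝ} (hlam : 0 < lam) (hw0 : 0 ≤ w) (hw : w ≤ 1 / lam) :
    lam * w * Real.log (1 + 1 / lam) ≤ Real.log (1 + w) := by
  have hs : (-1 : ℝ) ≤ 1 / lam := by
    have : (0:ℝ) < 1 / lam := by positivity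
    linarith
  have hp1 : 0 ≤ lam * w := by positivity
  have hp2 : lam * w ≤ 1 := by
    rw [div_eq_mul_inv, one_mul] at hw
    calc lam * w ≤ lam * lam⁻¹ := by nlinarith
    _ = 1 := mul_inv_cancel₀ hlam.ne'
  have hB := rpow_one_add_le_one_add_mul_self hs hp1 hp2
  have hBeq : 1 + lam * w * (1 / lam) = 1 + w := by field_simp
  rw [hBeq] at hB
  have hlog := Real.log_le_log (by positivity) hB
  rwa [Real.log_rpow (by positivity)] at hlog

lemma posSemidef_sum' {ι : Type*} (s : Finset ι) (M : ι → Matrix (Fin p) (Fin p) ℝ)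
    (h : ∀ i ∈ s, (M i).PosSemidef) : (∑ i ∈ s, M i).PosSemidef := by
  classical
  induction s using Finset.cons_induction with
  | empty => simpa using Matrix.PosSemidef.zero
  | cons a s ha ih =>
    rw [Finset.sum_cons]
    exact (h a (Finset.mem_cons_self a s)).add (ih fun i hi => h i (Finset.mem_cons.mpr (Or.inr hi)))

/-- Bound on the sum of confidence widths.  For vectors `ζ t k ∈ ℝ^p`
(`t = 0, …, n-1`, `k = 0, …, K-1`) of Euclidean norm at most 1, and
`Φ t = λ • I + ∑_{i < t} ∑_k (ζ i k)(ζ i k)ᵀ`, we have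
`∑_t ∑_k √(ζ t kᵀ (Φ t)⁻¹ ζ t k) ≤ K √(n p log(1 + nK/(pλ)) / (λ log(1 + 1/λ)))`. -/
theorem sum_sqrt_quadratic_inverse_le
    (p : ℕ) (hp : 1 ≤ p) (lam : ℝ) (hlam : 0 < lam)
    (n K : ℕ) (hn : 0 < n) (hK : 0 < K)
    (ζ : Fin n → Fin K → (Fin p → ℝ))
    (hζ : ∀ t k, Real.sqrt (ζ t k ⬝ᵥ ζ t k) ≤ 1)
    (Φ : Fin n → Matrix (Fin p) (Fin p) ℝ)
    (hΦ : ∀ t, Φ t = lam • (1 : Matrix (Fin p) (Fin p) ℝ)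
      + ∑ i ∈ Finset.univ.filter (fun i => i < t), ∑ k, vecMulVec (ζ i k) (ζ i k)) :
    ∑ t, ∑ k, Real.sqrt (ζ t k ⬝ᵥ (Φ t)⁻¹ *ᵥ ζ t k)
      ≤ K * Real.sqrt ((n * p * Real.log (1 + n * K / (p * lam)))
          / (lam * Real.log (1 + 1 / lam))) := by
  classical
  haveI : NeZero K := ⟨hK.ne'⟩
  set L := Real.log (1 + 1 / lam) with hL
  have hLpos : 0 < L := Real.log_pos (by
    have : (0:ℝ) < 1 / lam := by positivity
    linarith)
  set v : ℕ → Fin K → (Fin p → ℝ) := fun i k => if h : i < n then ζ ⟨i, h⟩ k else 0 with hv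
  have hvnorm : ∀ i k, v i k ⬝ᵥ v i k ≤ 1 := by
    intro i k
    by_cases h : i < n
    · have h0 : 0 ≤ ζ ⟨i, h⟩ k ⬝ᵥ ζ ⟨i, h⟩ k := by
        exact Finset.sum_nonneg fun j _ => mul_self_nonneg (ζ ⟨i, h⟩ k j)
      have h1 := hζ ⟨i, h⟩ k
      have h2 := Real.sq_sqrt h0
      simp only [hv, dif_pos h]
      nlinarith [Real.sqrt_nonneg (ζ ⟨i, h⟩ k ⬝ᵥ ζ ⟨i, h⟩ k)]
    · simp [hv, h]
  set g : ℕ → Matrix (Fin p) (Fin p) ℝ :=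
    fun m => lam • (1 : Matrix (Fin p) (Fin p) ℝ)
      + ∑ i ∈ Finset.range m, ∑ k, vecMulVec (v i k) (v i k) with hg
  have hsmulpd : (lam • (1 : Matrix (Fin p) (Fin p) ℝ)).PosDef := by
    rw [Matrix.smul_one_eq_diagonal]
    exact Matrix.posDef_diagonal_iff.mpr fun _ => hlam
  have hgpsd : ∀ m, (g m - lam • (1 : Matrix (Fin p) (Fin p) ℝ)).PosSemidef := by
    intro m
    rw [hg]
    simp only [add_sub_cancel_left]
    exact posSemidef_sum' _ _ fun i _ => posSemidef_sum' _ _ fun k _ => outer_posSemidef _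
  have hgpd : ∀ m, (g m).PosDef := by
    intro m
    rw [hg]
    exact hsmulpd.add_posSemidef
      (posSemidef_sum' _ _ fun i _ => posSemidef_sum' _ _ fun k _ => outer_posSemidef _)
  have hΦg : ∀ t : Fin n, Φ t = g t.val := by
    intro t
    rw [hΦ t, hg]
    congr 1
    refine Finset.sum_bij' (fun (i : Fin n) _ => (i : ℕ))
      (fun j hj => ⟨j, lt_of_lt_of_le (Finset.mem_range.mp hj) t.isLt.le⟩) ?_ ?_ ?_ ?_ ?_
    · intro i hi
      simp only [Finset.mem_filter, Finset.mem_univ, true_and] at hi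
      exact Finset.mem_range.mpr hi
    · intro j hj
      simp only [Finset.mem_filter, Finset.mem_univ, true_and]
      exact Finset.mem_range.mp hj
    · intro i hi; rfl
    · intro j hj; rfl
    · intro i hi
      refine Finset.sum_congr rfl fun k _ => ?_
      simp only [hv, dif_pos i.isLt]
  -- argmax choice
  have hmax : ∀ m : ℕ, ∃ k0 : Fin K, ∀ k : Fin K,
      v m k ⬝ᵥ (g m)⁻¹ *ᵥ v m k ≤ v m k0 ⬝ᵥ (g m)⁻¹ *ᵥ v m k0 := by
    intro m
    obtain ⟨k0, -, hk0⟩ := Finset.exists_max_image Finset.univ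
      (fun k : Fin K => v m k ⬝ᵥ (g m)⁻¹ *ᵥ v m k) Finset.univ_nonempty
    exact ⟨k0, fun k => hk0 k (Finset.mem_univ k)⟩
  choose ks hks using hmax
  set W : ℕ → ℝ := fun m => v m (ks m) ⬝ᵥ (g m)⁻¹ *ᵥ v m (ks m) with hW
  have hW0 : ∀ m, 0 ≤ W m := fun m => quad_nonneg (hgpd m).inv.posSemidef _
  have hWle : ∀ m, W m ≤ 1 / lam := fun m =>
    quad_inv_le hlam (hgpd m) (hgpsd m) (hvnorm m (ks m))
  -- determinant chain
  have chain : ∀ m, lam ^ p * ∏ t ∈ Finset.range m, (1 + W t) ≤ (g m).det := by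
    intro m
    induction m with
    | zero =>
      apply le_of_eq
      simp [hg, Matrix.det_smul, Matrix.det_one]
    | succ m ih =>
      have hsplit : g (m + 1) = (g m + vecMulVec (v m (ks m)) (v m (ks m)))
          + ∑ k ∈ Finset.univ.erase (ks m), vecMulVec (v m k) (v m k) := by
        rw [hg]
        simp only []
        rw [Finset.sum_range_succ, ← Finset.add_sum_erase _ _ (Finset.mem_univ (ks m))]
        abel
      have h1 : (g m).det * (1 + W m) ≤ (g (m + 1)).det := by
        rw [hsplit]
        refine le_trans (le_of_eq (det_rank_one (hgpd m) _).symm) ?_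
        exact det_le_det_add_sum_outer _ _ _ ((hgpd m).add_posSemidef (outer_posSemidef _))
      calc lam ^ p * ∏ t ∈ Finset.range (m + 1), (1 + W t)
          = (lam ^ p * ∏ t ∈ Finset.range m, (1 + W t)) * (1 + W m) := by
            rw [Finset.prod_range_succ]; ring
        _ ≤ (g m).det * (1 + W m) :=
            mul_le_mul_of_nonneg_right ih (by linarith [hW0 m])
        _ ≤ (g (m + 1)).det := h1
  -- trace bound
  have htr : (g n).trace ≤ lam * p + n * K := by
    rw [hg]
    simp only [Matrix.trace_add, Matrix.trace_smul, Matrix.trace_one, Matrix.trace_sum,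
      smul_eq_mul, Fintype.card_fin]
    have : ∀ i ∈ Finset.range n, ∑ k : Fin K, (vecMulVec (v i k) (v i k)).trace ≤ K := by
      intro i _
      calc ∑ k : Fin K, (vecMulVec (v i k) (v i k)).trace
          ≤ ∑ _k : Fin K, (1:ℝ) := Finset.sum_le_sum fun k _ => by
            rw [trace_outer]; exact hvnorm i k
        _ = K := by simp
    calc lam * p + ∑ i ∈ Finset.range n, ∑ k : Fin K, (vecMulVec (v i k) (v i k)).trace
        ≤ lam * p + ∑ _i ∈ Finset.range n, (K:ℝ) := by
          gcongr with i hi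
          exact this i hi
      _ = lam * p + n * K := by simp [mul_comm]
  have htr0 : 0 ≤ (g n).trace := by
    rw [hg]
    simp only [Matrix.trace_add, Matrix.trace_smul, Matrix.trace_one, Matrix.trace_sum,
      smul_eq_mul, Fintype.card_fin]
    have h1 : (0:ℝ) ≤ lam * p := by positivity
    have h2 : 0 ≤ ∑ i ∈ Finset.range n, ∑ k : Fin K, (vecMulVec (v i k) (v i k)).trace := by
      refine Finset.sum_nonneg fun i _ => Finset.sum_nonneg fun k _ => ?_
      rw [trace_outer]
      exact Finset.sum_nonneg fun j _ => mul_self_nonneg _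
    linarith
  set c : ℝ := 1 + n * K / (p * lam) with hc
  have hppos : (0:ℝ) < p := by exact_mod_cast hp
  have hc1 : (1:ℝ) ≤ c := by
    have h : (0:ℝ) ≤ (n:ℝ) * K / (p * lam) := by positivity
    rw [hc]; linarith
  have hceq : (lam * p + n * K) / p = c * lam := by
    rw [hc]; field_simp
  have hdet : (g n).det ≤ c ^ p * lam ^ p := by
    calc (g n).det ≤ ((g n).trace / p) ^ p := det_le_trace_div_pow (hgpd n).posSemidef hp
      _ ≤ ((lam * p + n * K) / p) ^ p := by
          have h0 : (0:ℝ) ≤ (g n).trace / p := by positivity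
          exact pow_le_pow_left₀ h0 (by gcongr) p
      _ = (c * lam) ^ p := by rw [hceq]
      _ = c ^ p * lam ^ p := mul_pow _ _ _
  have hprodle : ∏ t ∈ Finset.range n, (1 + W t) ≤ c ^ p := by
    have h := le_trans (chain n) hdet
    have hlp : (0:ℝ) < lam ^ p := by positivity
    nlinarith [h, hlp]
  have hlogs : ∑ t ∈ Finset.range n, Real.log (1 + W t) ≤ p * Real.log c := by
    have hpos : ∀ t ∈ Finset.range n, (0:ℝ) < 1 + W t := fun t _ => by linarith [hW0 t]
    calc ∑ t ∈ Finset.range n, Real.log (1 + W t)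
        = Real.log (∏ t ∈ Finset.range n, (1 + W t)) :=
          (Real.log_prod fun t ht => (hpos t ht).ne').symm
      _ ≤ Real.log (c ^ p) :=
          Real.log_le_log (Finset.prod_pos hpos) hprodle
      _ = p * Real.log c := Real.log_pow _ _
  have hsumW : ∑ t ∈ Finset.range n, W t ≤ p * Real.log c / (lam * L) := by
    have h2 : lam * L * ∑ t ∈ Finset.range n, W t ≤ p * Real.log c := by
      calc lam * L * ∑ t ∈ Finset.range n, W t
          = ∑ t ∈ Finset.range n, lam * W t * L := by
            rw [Finset.mul_sum]; exact Finset.sum_congr rfl fun t _ => by ring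
        _ ≤ ∑ t ∈ Finset.range n, Real.log (1 + W t) :=
            Finset.sum_le_sum fun t _ => log_concave_bound hlam (hW0 t) (hWle t)
        _ ≤ p * Real.log c := hlogs
    rw [le_div_iff₀ (by positivity : (0:ℝ) < lam * L)]
    linarith [h2]
  have hCS : ∑ t ∈ Finset.range n, Real.sqrt (W t)
      ≤ Real.sqrt n * Real.sqrt (∑ t ∈ Finset.range n, W t) := by
    have h := Real.sum_sqrt_mul_sqrt_le (f := fun _ => (1:ℝ)) (g := W)
      (Finset.range n) (fun _ => zero_le_one) hW0
    simpa using h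
  -- pointwise bound
  have hpoint : ∀ t : Fin n, ∑ k, Real.sqrt (ζ t k ⬝ᵥ (Φ t)⁻¹ *ᵥ ζ t k)
      ≤ K * Real.sqrt (W t.val) := by
    intro t
    have hterm : ∀ k : Fin K, Real.sqrt (ζ t k ⬝ᵥ (Φ t)⁻¹ *ᵥ ζ t k) ≤ Real.sqrt (W t.val) := by
      intro k
      apply Real.sqrt_le_sqrt
      have hvk : v t.val k = ζ t k := by simp [hv, t.isLt]
      rw [hΦg t, ← hvk]
      exact hks t.val k
    calc ∑ k, Real.sqrt (ζ t k ⬝ᵥ (Φ t)⁻¹ *ᵥ ζ t k)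
        ≤ ∑ _k : Fin K, Real.sqrt (W t.val) := Finset.sum_le_sum fun k _ => hterm k
      _ = K * Real.sqrt (W t.val) := by simp [mul_comm]
  have hfin : ∑ t : Fin n, Real.sqrt (W t.val) = ∑ t ∈ Finset.range n, Real.sqrt (W t) :=
    (Finset.sum_range fun t => Real.sqrt (W t)).symm
  calc ∑ t, ∑ k, Real.sqrt (ζ t k ⬝ᵥ (Φ t)⁻¹ *ᵥ ζ t k)
      ≤ ∑ t : Fin n, K * Real.sqrt (W t.val) := Finset.sum_le_sum fun t _ => hpoint t
    _ = K * ∑ t ∈ Finset.range n, Real.sqrt (W t) := by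
        rw [← Finset.mul_sum, hfin]
    _ ≤ K * (Real.sqrt n * Real.sqrt (∑ t ∈ Finset.range n, W t)) := by
        gcongr
    _ ≤ K * (Real.sqrt n * Real.sqrt (p * Real.log c / (lam * L))) := by
        gcongr
    _ = K * Real.sqrt (n * p * Real.log c / (lam * L)) := by
        rw [← Real.sqrt_mul (by positivity : (0:ℝ) ≤ (n:ℝ))]
        congr 2
        ring
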